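/- Fix an integer k ≥ 1. The following are equivalent: (1) 2^ℵ0 > ℵ1; (2) for every ℵ0-coloring of ℝ^k, there exist four pairwise distinct vectors e1, e2, e3, e4 ∈ ℝ^k of the same color such that e1 + e2 = e3 + e4. -/

import Mathlib

open Cardinal Set

namespace SRkAux

variable {V : Type} [AddCommGroup V]

/-- Iterated closure of `s` under subtraction and a countable family of unary operations. -/
def it (u : ℕ → V → V) (s : Set V) : ℕ → Set V
  | 0 => insert 0 s
  | m + 1 =>
      it u s m ∪ Set.image2 (· - ·) (it u s m) (it u s m) ∪ ⋃ n, u n '' it u s m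

/-- Closure of `s` under subtraction and the operations `u n`. -/
def cl (u : ℕ → V → V) (s : Set V) : Set V := ⋃ m, it u s m

lemma it_succ_subset (u : ℕ → V → V) (s : Set V) (m : ℕ) :
    it u s m ⊆ it u s (m + 1) := fun x hx => Or.inl (Or.inl hx)

lemma it_mono (u : ℕ → V → V) (s : Set V) {m m' : ℕ} (h : m ≤ m') :
    it u s m ⊆ it u s m' := by
  induction h with
  | refl => exact subset_rfl
  | step _ ih => exact ih.trans (it_succ_subset _ _ _)

lemma subset_cl (u : ℕ → V → V) (s : Set V) : s ⊆ cl u s :=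
  fun x hx => mem_iUnion.2 ⟨0, Or.inr hx⟩

lemma zero_mem_cl (u : ℕ → V → V) (s : Set V) : (0 : V) ∈ cl u s :=
  mem_iUnion.2 ⟨0, Or.inl rfl⟩

lemma sub_mem_cl {u : ℕ → V → V} {s : Set V} {a b : V}
    (ha : a ∈ cl u s) (hb : b ∈ cl u s) : a - b ∈ cl u s := by
  obtain ⟨m1, hm1⟩ := mem_iUnion.1 ha
  obtain ⟨m2, hm2⟩ := mem_iUnion.1 hb
  refine mem_iUnion.2 ⟨max m1 m2 + 1, Or.inl (Or.inr ?_)⟩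
  exact mem_image2_of_mem (it_mono u s (le_max_left _ _) hm1)
    (it_mono u s (le_max_right _ _) hm2)

lemma u_mem_cl {u : ℕ → V → V} {s : Set V} {d : V} (n : ℕ)
    (hd : d ∈ cl u s) : u n d ∈ cl u s := by
  obtain ⟨m, hm⟩ := mem_iUnion.1 hd
  exact mem_iUnion.2 ⟨m + 1, Or.inr (mem_iUnion.2 ⟨n, mem_image_of_mem _ hm⟩)⟩

lemma neg_mem_cl {u : ℕ → V → V} {s : Set V} {a : V}
    (ha : a ∈ cl u s) : -a ∈ cl u s := by
  simpa using sub_mem_cl (zero_mem_cl u s) ha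

lemma add_mem_cl {u : ℕ → V → V} {s : Set V} {a b : V}
    (ha : a ∈ cl u s) (hb : b ∈ cl u s) : a + b ∈ cl u s := by
  have := sub_mem_cl ha (neg_mem_cl hb)
  simpa using this

lemma cl_mono (u : ℕ → V → V) {s t : Set V} (hst : s ⊆ t) :
    cl u s ⊆ cl u t := by
  refine iUnion_mono fun m => ?_
  induction m with
  | zero => exact insert_subset_insert hst
  | succ m ih =>
      refine union_subset (union_subset ?_ ?_) ?_
      · exact fun x hx => it_succ_subset u t m (ih hx)
      · intro x hx
        obtain ⟨a, ha, b, hb, rfl⟩ := hx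
        exact Or.inl (Or.inr (mem_image2_of_mem (ih ha) (ih hb)))
      · intro x hx
        obtain ⟨n, hn⟩ := mem_iUnion.1 hx
        obtain ⟨a, ha, rfl⟩ := hn
        exact Or.inr (mem_iUnion.2 ⟨n, mem_image_of_mem _ (ih ha)⟩)

lemma mk_it_le {u : ℕ → V → V} {s : Set V} {c : Cardinal}
    (hc : ℵ₀ ≤ c) (hs : #s ≤ c) : ∀ m, #(it u s m) ≤ c := by
  intro m
  induction m with
  | zero =>
      refine (mk_insert_le).trans ?_
      calc #s + 1 ≤ c + c := add_le_add hs ((one_le_aleph0).trans hc)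
      _ = c := add_eq_self hc
  | succ m ih =>
      refine (mk_union_le _ _).trans ?_
      have h1 : #(it u s m ∪ Set.image2 (· - ·) (it u s m) (it u s m) : Set V) ≤ c := by
        refine (mk_union_le _ _).trans ?_
        have h2 : #(Set.image2 (· - ·) (it u s m) (it u s m)) ≤ c := by
          refine (mk_image2_le).trans ?_
          calc #(it u s m) * #(it u s m) ≤ c * c := mul_le_mul' ih ih
          _ = c := mul_eq_self hc
        calc #(it u s m) + #(Set.image2 (· - ·) (it u s m) (it u s m)) ≤ c + c :=
          add_le_add ih h2
        _ = c := add_eq_self hc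
      have h3 : #(⋃ n, u n '' it u s m) ≤ c := by
        refine (mk_iUnion_le _).trans ?_
        have : ⨆ n, #(u n '' it u s m) ≤ c := ciSup_le fun n => mk_image_le.trans ih
        calc #ℕ * ⨆ n, #(u n '' it u s m) ≤ ℵ₀ * c := by
              rw [mk_nat]; exact mul_le_mul' le_rfl this
        _ ≤ c * c := mul_le_mul' hc le_rfl
        _ = c := mul_eq_self hc
      calc _ ≤ c + c := add_le_add h1 h3
      _ = c := add_eq_self hc

lemma mk_cl_le {u : ℕ → V → V} {s : Set V} {c : Cardinal}
    (hc : ℵ₀ ≤ c) (hs : #s ≤ c) : #(cl u s) ≤ c := by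
  refine (mk_iUnion_le _).trans ?_
  have : ⨆ m, #(it u s m) ≤ c := ciSup_le fun m => mk_it_le hc hs m
  calc #ℕ * ⨆ m, #(it u s m) ≤ ℵ₀ * c := by rw [mk_nat]; exact mul_le_mul' le_rfl this
  _ ≤ c * c := mul_le_mul' hc le_rfl
  _ = c := mul_eq_self hc


section Main

variable {V : Type} [AddCommGroup V]

/-- If `ℵ₁ < #V` then every `ℵ₀`-coloring of `V` admits a monochromatic quadruple. -/
theorem exists_mono_quadruple (h2 : Cardinal.aleph 1 < #V) (COL : V → ℕ) :
    ∃ e1 e2 e3 e4 : V,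
      e1 ≠ e2 ∧ e1 ≠ e3 ∧ e1 ≠ e4 ∧ e2 ≠ e3 ∧ e2 ≠ e4 ∧ e3 ≠ e4 ∧
      COL e1 = COL e2 ∧ COL e2 = COL e3 ∧ COL e3 = COL e4 ∧
      e1 + e2 = e3 + e4 := by
  classical
  by_contra hn
  push_neg at hn
  -- The "Sidon" sets
  set S : ℕ → V → Set V := fun n d => {x | COL x = n ∧ COL (x - d) = n} with hSdef
  set U : ℕ → V → V := fun n d =>
    if h : (S n d).Nonempty then h.choose else 0 with hUdef
  have pair : ∀ n (d : V), d ≠ 0 → ∀ a ∈ S n d, ∀ b ∈ S n d,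
      a = b ∨ a = b + d ∨ b = a + d := by
    intro n d hd a ha b hb
    by_contra hcon
    push_neg at hcon
    obtain ⟨hab, habd, hbad⟩ := hcon
    refine hn a (b - d) b (a - d) ?_ hab ?_ ?_ ?_ ?_ ?_ ?_ ?_ ?_
    · intro h; exact hbad (eq_sub_iff_add_eq.1 h).symm
    · intro h; exact hd (sub_eq_self.1 h.symm)
    · intro h; exact hd (sub_eq_self.1 h)
    · intro h; exact hab (sub_left_injective h).symm
    · intro h; exact habd (eq_sub_iff_add_eq.1 h).symm
    · exact ha.1.trans hb.2.symm
    · exact hb.2.trans hb.1.symm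
    · exact hb.1.trans ha.2.symm
    · abel
  have S_subset : ∀ n (d : V), d ≠ 0 →
      S n d ⊆ {U n d, U n d + d, U n d - d} := by
    intro n d hd x hx
    have hne : (S n d).Nonempty := ⟨x, hx⟩
    have hU : U n d ∈ S n d := by
      rw [hUdef]; simp only [dif_pos hne]; exact hne.choose_spec
    rcases pair n d hd x hx (U n d) hU with h | h | h
    · exact Or.inl h
    · exact Or.inr (Or.inl h)
    · exact Or.inr (Or.inr (eq_sub_iff_add_eq.2 h.symm))
  obtain ⟨S0, hS0⟩ := Cardinal.le_mk_iff_exists_set.1 h2.le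
  set H := cl U S0 with hHdef
  have hHcard : #H ≤ Cardinal.aleph 1 :=
    mk_cl_le (aleph0_le_aleph 1) (le_of_eq hS0)
  have hg : ∃ g, g ∉ H := by
    by_contra hG
    push_neg at hG
    have huniv : (univ : Set V) = H := (eq_univ_of_forall hG).symm
    have : #V ≤ Cardinal.aleph 1 := by
      calc #V = #(univ : Set V) := mk_univ.symm
      _ = #H := by rw [huniv]
      _ ≤ Cardinal.aleph 1 := hHcard
    exact absurd this (not_le.2 h2)
  obtain ⟨g, hg⟩ := hg
  have hS0H : Cardinal.aleph 1 ≤ #H := hS0 ▸ mk_le_mk_of_subset (subset_cl U S0)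
  have pigeon : ∃ h1 ∈ H, ∃ h2 ∈ H, h1 ≠ h2 ∧ COL (g + h1) = COL (g + h2) := by
    by_contra hc
    push_neg at hc
    have hinj : InjOn (fun x => COL (g + x)) H := by
      intro a ha b hb heq
      by_contra hne
      exact hc a ha b hb hne heq
    have : H.Countable := Set.countable_iff_exists_injOn.2 ⟨_, hinj⟩
    have : #H ≤ ℵ₀ := Cardinal.mk_le_aleph0_iff.2 this.to_subtype
    exact absurd (hS0H.trans this) (not_le.2 aleph0_lt_aleph_one)
  obtain ⟨h1, hh1, h2', hh2, hne, hcol⟩ := pigeon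
  set n := COL (g + h1) with hndef
  set d := h1 - h2' with hddef
  have hd0 : d ≠ 0 := sub_ne_zero.2 hne
  have hdH : d ∈ H := sub_mem_cl hh1 hh2
  have hgS : g + h1 ∈ S n d := by
    refine ⟨rfl, ?_⟩
    have : g + h1 - d = g + h2' := by rw [hddef]; abel
    rw [this]; exact hcol.symm
  have hUH : U n d ∈ H := u_mem_cl n hdH
  have hgh1H : g + h1 ∈ H := by
    rcases S_subset n d hd0 hgS with h | h | h
    · rw [h]; exact hUH
    · rw [h]; exact add_mem_cl hUH hdH
    · rw [h]; exact sub_mem_cl hUH hdH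
  have : g ∈ H := by
    have hgid : g + h1 - h1 = g := by abel
    have := sub_mem_cl hgh1H hh1
    rwa [hgid] at this
  exact hg this

/-- If `#V ≤ ℵ₁` then there is an `ℵ₀`-coloring of `V` with no monochromatic quadruple. -/
theorem exists_good_coloring (h : #V ≤ Cardinal.aleph 1) :
    ∃ COL : V → ℕ, ∀ e1 e2 e3 e4 : V,
      e1 ≠ e2 → e1 ≠ e3 → e1 ≠ e4 → e2 ≠ e3 → e2 ≠ e4 → e3 ≠ e4 →
      COL e1 = COL e2 → COL e2 = COL e3 → COL e3 = COL e4 →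
      e1 + e2 ≠ e3 + e4 := by
  classical
  have hO : #(Cardinal.aleph 1).ord.ToType = Cardinal.aleph 1 := by
    rw [mk_toType, Cardinal.card_ord]
  obtain ⟨φ⟩ : Nonempty (V ↪ (Cardinal.aleph 1).ord.ToType) :=
    (Cardinal.le_def V _).1 (le_of_le_of_eq h hO.symm)
  obtain ⟨G, Gmono, Gcnt, Gbase, Gsub, Gadd⟩ :
      ∃ G : (Cardinal.aleph 1).ord.ToType → Set V,
        (∀ {o o'}, o ≤ o' → G o ⊆ G o') ∧
        (∀ o, (G o).Countable) ∧
        (∀ x : V, x ∈ G (φ x)) ∧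
        (∀ o (a b : V), a ∈ G o → b ∈ G o → a - b ∈ G o) ∧
        (∀ o (a b : V), a ∈ G o → b ∈ G o → a + b ∈ G o) := by
    refine ⟨fun o => cl (fun _ => id) (φ ⁻¹' (Iic o)),
      fun hoo => cl_mono _ (preimage_mono (Iic_subset_Iic.2 hoo)), ?_,
      fun x => subset_cl _ _ (by simp), fun o a b ha hb => sub_mem_cl ha hb,
      fun o a b ha hb => add_mem_cl ha hb⟩
    intro o
    have h1 : (Iio o).Countable :=
      (countable_iff_lt_aleph_one _).2 (mk_Iio_ord_toType o)
    have h2 : (Iic o).Countable := by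
      refine (h1.insert o).mono ?_
      intro x hx
      rcases eq_or_lt_of_le (mem_Iic.1 hx) with h' | h'
      · exact Or.inl h'
      · exact Or.inr h'
    have h3 : (φ ⁻¹' (Iic o)).Countable := h2.preimage φ.injective
    have h4 : #(cl (fun _ : ℕ => (id : V → V)) (φ ⁻¹' (Iic o))) ≤ ℵ₀ :=
      mk_cl_le le_rfl (Cardinal.mk_le_aleph0_iff.2 h3.to_subtype)
    exact Set.countable_coe_iff.1 (Cardinal.mk_le_aleph0_iff.1 h4)
  have wf : WellFounded ((· < ·) : (Cardinal.aleph 1).ord.ToType → _ → Prop) :=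
    IsWellFounded.wf
  obtain ⟨ρ, ρmem, ρmin⟩ :
      ∃ ρ : V → (Cardinal.aleph 1).ord.ToType,
        (∀ x, x ∈ G (ρ x)) ∧ (∀ x o, x ∈ G o → ρ x ≤ o) :=
    ⟨fun x => wf.min {o | x ∈ G o} ⟨φ x, Gbase x⟩,
      fun x => by exact wf.min_mem {o | x ∈ G o} ⟨φ x, Gbase x⟩,
      fun x o ho => not_lt.1 (by exact wf.not_lt_min {o' | x ∈ G o'} ho)⟩
  have hex : ∀ o, ∃ f : V → ℕ, InjOn f (G o) := fun o =>
    Set.countable_iff_exists_injOn.1 (Gcnt o)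
  choose F hF using hex
  have key : ∀ a b : V, ρ a = ρ b → F (ρ a) a = F (ρ b) b → a = b := by
    intro a b hr hc
    refine hF (ρ a) (ρmem a) (hr ▸ ρmem b) ?_
    rwa [hr] at hc ⊢
  have key2 : ∀ a b c d : V, a + b = c + d →
      ρ b < ρ a → ρ c < ρ a → ρ d < ρ a → False := by
    intro a b c d heq hb hc hd
    set m := max (ρ b) (max (ρ c) (ρ d)) with hmdef
    have hbm : b ∈ G m := Gmono (le_max_left _ _) (ρmem b)
    have hcm : c ∈ G m := Gmono ((le_max_left _ _).trans (le_max_right _ _)) (ρmem c)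
    have hdm : d ∈ G m := Gmono ((le_max_right _ _).trans (le_max_right _ _)) (ρmem d)
    have ham : a ∈ G m := by
      have ha : a = c + d - b := by rw [← heq]; abel
      rw [ha]
      exact Gsub m _ _ (Gadd m _ _ hcm hdm) hbm
    have h1 : ρ a ≤ m := ρmin a m ham
    have h2 : m < ρ a := max_lt hb (max_lt hc hd)
    exact absurd h1 (not_le.2 h2)
  refine ⟨fun x => F (ρ x) x, ?_⟩
  intro e1 e2 e3 e4 h12 h13 h14 h23 h24 h34 c12 c23 c34 heq
  simp only at c12 c23 c34
  have c13 : F (ρ e1) e1 = F (ρ e3) e3 := c12.trans c23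
  have c14 : F (ρ e1) e1 = F (ρ e4) e4 := c13.trans c34
  have c24 : F (ρ e2) e2 = F (ρ e4) e4 := c23.trans c34
  have r12 : ρ e1 ≠ ρ e2 := fun hr => h12 (key _ _ hr c12)
  have r13 : ρ e1 ≠ ρ e3 := fun hr => h13 (key _ _ hr c13)
  have r14 : ρ e1 ≠ ρ e4 := fun hr => h14 (key _ _ hr c14)
  have r23 : ρ e2 ≠ ρ e3 := fun hr => h23 (key _ _ hr c23)
  have r24 : ρ e2 ≠ ρ e4 := fun hr => h24 (key _ _ hr c24)
  have r34 : ρ e3 ≠ ρ e4 := fun hr => h34 (key _ _ hr c34)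
  set M := max (max (ρ e1) (ρ e2)) (max (ρ e3) (ρ e4)) with hMdef
  have l1 : ρ e1 ≤ M := (le_max_left _ _).trans (le_max_left _ _)
  have l2 : ρ e2 ≤ M := (le_max_right _ _).trans (le_max_left _ _)
  have l3 : ρ e3 ≤ M := (le_max_left _ _).trans (le_max_right _ _)
  have l4 : ρ e4 ≤ M := (le_max_right _ _).trans (le_max_right _ _)
  have hM : M = ρ e1 ∨ M = ρ e2 ∨ M = ρ e3 ∨ M = ρ e4 := by
    rcases max_choice (max (ρ e1) (ρ e2)) (max (ρ e3) (ρ e4)) with h' | h' <;>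
      rw [hMdef, h']
    · rcases max_choice (ρ e1) (ρ e2) with h'' | h'' <;> rw [h'']
      · exact Or.inl rfl
      · exact Or.inr (Or.inl rfl)
    · rcases max_choice (ρ e3) (ρ e4) with h'' | h'' <;> rw [h'']
      · exact Or.inr (Or.inr (Or.inl rfl))
      · exact Or.inr (Or.inr (Or.inr rfl))
  rcases hM with hM | hM | hM | hM
  · exact key2 e1 e2 e3 e4 heq (lt_of_le_of_ne (hM ▸ l2) r12.symm)
      (lt_of_le_of_ne (hM ▸ l3) r13.symm) (lt_of_le_of_ne (hM ▸ l4) r14.symm)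
  · exact key2 e2 e1 e3 e4 (by rw [add_comm]; exact heq)
      (lt_of_le_of_ne (hM ▸ l1) r12) (lt_of_le_of_ne (hM ▸ l3) r23.symm)
      (lt_of_le_of_ne (hM ▸ l4) r24.symm)
  · exact key2 e3 e4 e1 e2 heq.symm (lt_of_le_of_ne (hM ▸ l4) r34.symm)
      (lt_of_le_of_ne (hM ▸ l1) r13) (lt_of_le_of_ne (hM ▸ l2) r23)
  · exact key2 e4 e3 e1 e2 (by rw [add_comm]; exact heq.symm)
      (lt_of_le_of_ne (hM ▸ l3) r34) (lt_of_le_of_ne (hM ▸ l1) r14)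
      (lt_of_le_of_ne (hM ▸ l2) r24)

end Main

end SRkAux

/-- For `k ≥ 1`: `2^ℵ₀ > ℵ₁` iff every `ℵ₀`-coloring of `ℝ^k` admits four
pairwise distinct monochromatic vectors with `e1 + e2 = e3 + e4`. -/
theorem S_Rk_iff_not_CH (k : ℕ) (hk : 1 ≤ k) :
    Cardinal.aleph 1 < (2 : Cardinal) ^ Cardinal.aleph0 ↔
    ∀ COL : (Fin k → ℝ) → ℕ,
      ∃ e1 e2 e3 e4 : Fin k → ℝ,
        e1 ≠ e2 ∧ e1 ≠ e3 ∧ e1 ≠ e4 ∧ e2 ≠ e3 ∧ e2 ≠ e4 ∧ e3 ≠ e4 ∧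
        COL e1 = COL e2 ∧ COL e2 = COL e3 ∧ COL e3 = COL e4 ∧
        e1 + e2 = e3 + e4 := by
  classical
  set V := Fin k → ℝ with hVdef
  have hV : #V = (2 : Cardinal) ^ ℵ₀ := by
    have h1 : #V = #ℝ ^ (#(Fin k)) := (Cardinal.power_def ℝ (Fin k)).symm
    rw [h1, Cardinal.mk_real, Cardinal.mk_fin, ← Cardinal.two_power_aleph0,
      ← Cardinal.power_mul, Cardinal.mul_eq_left le_rfl (Cardinal.nat_lt_aleph0 k).le
        (by exact_mod_cast Nat.one_le_iff_ne_zero.1 hk)]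
  rw [show Cardinal.aleph 1 = Cardinal.lift.{_,0} (Cardinal.aleph 1) by
        simp [Cardinal.lift_aleph],
      show ((2 : Cardinal) ^ Cardinal.aleph0 : Cardinal)
          = Cardinal.lift.{_,0} ((2 : Cardinal) ^ Cardinal.aleph0) by
        simp [Cardinal.lift_two_power],
      Cardinal.lift_lt]
  constructor
  · intro h COL
    have h2 : Cardinal.aleph 1 < #V := by rw [hV]; exact h
    exact SRkAux.exists_mono_quadruple h2 COL
  · intro hall
    by_contra hch
    have hle : #V ≤ Cardinal.aleph 1 := by rw [hV]; exact not_lt.1 hch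
    obtain ⟨COL, hCOL⟩ := SRkAux.exists_good_coloring hle
    obtain ⟨e1, e2, e3, e4, h12, h13, h14, h23, h24, h34, c12, c23, c34, heq⟩ := hall COL
    exact hCOL e1 e2 e3 e4 h12 h13 h14 h23 h24 h34 c12 c23 c34 heq
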